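/- With F a discrete distribution function on ℕ₀ and α ∈ (0,1], the identity ⌈u⌉_{α,F} = F_α(F^←(u)) holds for all u ∈ (0,1), where F^←(u) = inf{x ∈ ℝ : F(x) ≥ u} is the pseudo-inverse of F. -/
import Mathlib


open MeasureTheory Set Filter

/-- `F(n-1)` with the convention `F(-1) = 0`. -/
noncomputable def Fm (F : ℕ → ℝ) : ℕ → ℝ := fun n => if n = 0 then 0 else F (n - 1)

/-- `F_α(n) = (1-α) F(n-1) + α F(n)`. -/
noncomputable def Falpha (α : ℝ) (F : ℕ → ℝ) (n : ℕ) : ℝ :=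
  (1 - α) * Fm F n + α * F n

/-- `⌈u⌉_{α,F} = Σ_{n ≥ 0} F_α(n) · 1_{(F(n-1), F(n)]}(u)`, with `⌈0⌉ = 0` automatic. -/
noncomputable def ceilT (α : ℝ) (F : ℕ → ℝ) (u : ℝ) : ℝ :=
  ∑' n : ℕ, Falpha α F n * Set.indicator (Set.Ioc (Fm F n) (F n)) (fun _ => (1 : ℝ)) u

/-- `⌈u⌉_{α,F} = F_α(F^←(u))` for all `u ∈ (0,1)`, where
`F^←(u) = inf {n : F(n) ≥ u}` is the pseudo-inverse (quantile function) of the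
discrete distribution function `F` on `ℕ₀`. -/
theorem stmt1 (F : ℕ → ℝ) (hmono : Monotone F) (hF0 : ∀ n, 0 ≤ F n) (hF1 : ∀ n, F n ≤ 1)
    (hlim : Tendsto F atTop (nhds 1)) (α : ℝ) (hα : α ∈ Set.Ioc (0 : ℝ) 1) :
    ∀ u ∈ Set.Ioo (0 : ℝ) 1, ceilT α F u = Falpha α F (sInf {n : ℕ | u ≤ F n}) := by
  intro u hu
  obtain ⟨hu0, hu1⟩ := hu
  -- The set is nonempty since F → 1 > u
  have hne : {n : ℕ | u ≤ F n}.Nonempty := by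
    have := (hlim.eventually (eventually_ge_nhds (show (u + 1) / 2 < 1 by linarith)))
    obtain ⟨n, hn⟩ := this.exists
    exact ⟨n, le_trans (by linarith) hn⟩
  set N := sInf {n : ℕ | u ≤ F n} with hN
  have hNmem : u ≤ F N := Nat.sInf_mem hne
  have hNlt : Fm F N < u := by
    unfold Fm
    by_cases h : N = 0
    · simp [h, hu0]
    · simp only [h, if_false]
      by_contra hcon
      push_neg at hcon
      have : N - 1 ∈ {n : ℕ | u ≤ F n} := hcon
      have := Nat.sInf_le this
      omega
  unfold ceilT
  rw [tsum_eq_single N]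
  · rw [Set.indicator_of_mem (Set.mem_Ioc.mpr ⟨hNlt, hNmem⟩), mul_one]
  · intro n hn
    have : u ∉ Set.Ioc (Fm F n) (F n) := by
      rcases lt_or_gt_of_ne hn with h | h
      · -- n < N, so F n < u (else n ∈ set contradicting sInf)
        intro hmem
        obtain ⟨_, h2⟩ := hmem
        have : N ≤ n := Nat.sInf_le h2
        omega
      · -- n > N, so Fm F n = F (n-1) ≥ F N ≥ u
        intro hmem
        obtain ⟨h1, _⟩ := hmem
        have hn0 : n ≠ 0 := by omega
        have : F N ≤ Fm F n := by
          unfold Fm; simp only [hn0, if_false]; exact hmono (by omega)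
        linarith
    rw [Set.indicator_of_notMem this, mul_zero]
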